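/- For any guaranteed scoring game G and integer n ≥ b(G) (the birthday of G), the pass-allowed Left-stop satisfies L̲s(G) = Ls(G − n̂), where n̂ is the waiting-move game (the image of the Normal-play integer n) and −n̂ its conjugate. Symmetrically, R̄s(G) = Rs(G + n̂). -/

import Mathlib

/-- A scoring game: `la`/`ra` are the atom values (relevant when the
corresponding option list is empty), `L`/`R` the Left and Right options. -/
inductive SG : Type
  | mk (la ra : ℝ) (L R : List SG) : SG

namespace SG

theorem sizeOf_lt_of_mem {g : SG} {l : List SG} (h : g ∈ l) : sizeOf g < sizeOf l :=
  List.sizeOf_lt_of_mem h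

noncomputable instance : DecidableEq SG := Classical.decEq _

def la : SG → ℝ | mk a _ _ _ => a
def ra : SG → ℝ | mk _ b _ _ => b
def L : SG → List SG | mk _ _ l _ => l
def R : SG → List SG | mk _ _ _ r => r

/-- The list of atom values occurring in atomic followers of a game. -/
def atomList : SG → List ℝ
  | mk a b ls rs =>
    (if ls.isEmpty then [a] else (ls.attach.map (fun x => atomList x.1)).flatten)
    ++ (if rs.isEmpty then [b] else (rs.attach.map (fun x => atomList x.1)).flatten)
decreasing_by all_goals (simp only [SG.mk.sizeOf_spec]; (first | (have := sizeOf_lt_of_mem x.2) | (have := sizeOf_lt_of_mem (by assumption : x ∈ _))); omega)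

/-- The guaranteed condition. -/
def Guaranteed : SG → Prop
  | mk a b ls rs =>
    (∀ x ∈ ls, Guaranteed x) ∧ (∀ x ∈ rs, Guaranteed x) ∧
    (ls = [] → ∀ s ∈ (mk a b ls rs).atomList, a ≤ s) ∧
    (rs = [] → ∀ s ∈ (mk a b ls rs).atomList, s ≤ b)
decreasing_by all_goals (simp only [SG.mk.sizeOf_spec]; (first | (have := sizeOf_lt_of_mem x.2) | (have := sizeOf_lt_of_mem (by assumption : x ∈ _))); omega)

/-- Disjunctive sum. -/
noncomputable def add : SG → SG → SG
  | mk a1 b1 L1 R1, mk a2 b2 L2 R2 =>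
    mk (a1 + a2) (b1 + b2)
      (L1.attach.map (fun x => add x.1 (mk a2 b2 L2 R2))
        ++ L2.attach.map (fun x => add (mk a1 b1 L1 R1) x.1))
      (R1.attach.map (fun x => add x.1 (mk a2 b2 L2 R2))
        ++ R2.attach.map (fun x => add (mk a1 b1 L1 R1) x.1))
termination_by g h => sizeOf g + sizeOf h
decreasing_by all_goals (simp only [SG.mk.sizeOf_spec]; (first | (have := sizeOf_lt_of_mem x.2) | (have := sizeOf_lt_of_mem (by assumption : x ∈ _))); omega)

/-- Left- and Right-stops (as a pair). -/
noncomputable def stops : SG → ℝ × ℝ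
  | mk a b ls rs =>
    (if ls.isEmpty then a else (WithBot.unbotD 0 (ls.attach.map (fun x => (stops x.1).2)).maximum),
     if rs.isEmpty then b else (WithTop.untopD 0 (rs.attach.map (fun x => (stops x.1).1)).minimum))
decreasing_by all_goals (simp only [SG.mk.sizeOf_spec]; (first | (have := sizeOf_lt_of_mem x.2) | (have := sizeOf_lt_of_mem (by assumption : x ∈ _))); omega)

noncomputable def Ls (g : SG) : ℝ := g.stops.1
noncomputable def Rs (g : SG) : ℝ := g.stops.2

/-- The conjugate: interchange Left and Right and negate atoms. -/
noncomputable def conj : SG → SG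
  | mk a b ls rs =>
    mk (-b) (-a) (rs.attach.map (fun x => conj x.1)) (ls.attach.map (fun x => conj x.1))
decreasing_by all_goals (simp only [SG.mk.sizeOf_spec]; (first | (have := sizeOf_lt_of_mem x.2) | (have := sizeOf_lt_of_mem (by assumption : x ∈ _))); omega)

/-- The game ⟨∅^s | ∅^s⟩ of a real number `s`. -/
def num (s : ℝ) : SG := mk s s [] []

/-- The zero game ⟨∅^0 | ∅^0⟩. -/
def zero : SG := num 0

/-- Waiting moves: the image of the Normal-play integer `n`. -/
def wait : ℕ → SG
  | 0 => zero
  | n + 1 => mk 0 0 [wait n] []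

/-- Birthday: the depth of the game tree. -/
def birthday : SG → ℕ
  | mk _ _ ls rs =>
    max (WithBot.unbotD 0 (ls.attach.map (fun x => birthday x.1 + 1)).maximum)
        (WithBot.unbotD 0 (rs.attach.map (fun x => birthday x.1 + 1)).maximum)
decreasing_by all_goals (simp only [SG.mk.sizeOf_spec]; (first | (have := sizeOf_lt_of_mem x.2) | (have := sizeOf_lt_of_mem (by assumption : x ∈ _))); omega)

/-- `Ge G H` is the order `G ≽ H`. -/
def Ge (G H : SG) : Prop :=
  ∀ X : SG, X.Guaranteed → Ls (G.add X) ≥ Ls (H.add X) ∧ Rs (G.add X) ≥ Rs (H.add X)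

/-- Equivalence `G ∼ H`. -/
def Equiv (G H : SG) : Prop := Ge G H ∧ Ge H G

/-- Right's pass-allowed Left-stop `L̲s(G) = min_n Ls(G - n̂)`. -/
noncomputable def lsU (G : SG) : ℝ := ⨅ n : ℕ, Ls (G.add (wait n).conj)

/-- Left's pass-allowed Right-stop `R̄s(G) = max_n Rs(G + n̂)`. -/
noncomputable def rsO (G : SG) : ℝ := ⨆ n : ℕ, Rs (G.add (wait n))

/-- `L̄s(G) = max_n Ls(G + n̂)`. -/
noncomputable def lsO (G : SG) : ℝ := ⨆ n : ℕ, Ls (G.add (wait n))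

/-- `R̲s(G) = min_n Rs(G + n̂)`. -/
noncomputable def rsU (G : SG) : ℝ := ⨅ n : ℕ, Rs (G.add (wait n))

/-- Identity of games: same tree structure (up to reordering of options),
with identical atoms at atomic positions. -/
def Ident : SG → SG → Prop
  | mk a1 b1 L1 R1, mk a2 b2 L2 R2 =>
    (L1 = [] ↔ L2 = []) ∧ (L1 = [] → a1 = a2) ∧
    (R1 = [] ↔ R2 = []) ∧ (R1 = [] → b1 = b2) ∧
    (∀ x ∈ L1, ∃ y : {z // z ∈ L2}, Ident x y.1) ∧
    (∀ y ∈ L2, ∃ x : {z // z ∈ L1}, Ident x.1 y) ∧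
    (∀ x ∈ R1, ∃ y : {z // z ∈ R2}, Ident x y.1) ∧
    (∀ y ∈ R2, ∃ x : {z // z ∈ R1}, Ident x.1 y)
termination_by g h => sizeOf g
decreasing_by all_goals (simp only [SG.mk.sizeOf_spec]; (first | (have := sizeOf_lt_of_mem x.2) | (have := sizeOf_lt_of_mem (by assumption : x ∈ _))); omega)

/-- `Linked H G`: `H` is linked to `G` (by some guaranteed `T`). -/
def Linked (H G : SG) : Prop :=
  ∃ T : SG, T.Guaranteed ∧ Ls (H.add T) < 0 ∧ 0 < Rs (G.add T)

/-- Replace every atom of `G` by `∅^x`. -/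
def subst (v : ℝ) : SG → SG
  | mk _ _ ls rs =>
    mk v v (ls.attach.map (fun x => subst v x.1)) (rs.attach.map (fun x => subst v x.1))
decreasing_by all_goals (simp only [SG.mk.sizeOf_spec]; (first | (have := sizeOf_lt_of_mem x.2) | (have := sizeOf_lt_of_mem (by assumption : x ∈ _))); omega)

/-- The maximum atom value in `G`. -/
noncomputable def maxAtom (G : SG) : ℝ := WithBot.unbotD 0 G.atomList.maximum

/-- The minimum atom value in `G`. -/
noncomputable def minAtom (G : SG) : ℝ := WithTop.untopD 0 G.atomList.minimum
theorem isEmpty_map {α β : Type*} (f : α → β) (l : List α) : (l.map f).isEmpty = l.isEmpty := by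
  cases l <;> rfl

theorem minimum_untop'_singleton {α : Type*} [LinearOrder α] (x d : α) :
    (WithTop.untopD d [x].minimum) = x := by
  rw [List.minimum_singleton]; rfl

theorem maximum_unbot'_singleton {α : Type*} [LinearOrder α] (x d : α) :
    (WithBot.unbotD d [x].maximum) = x := by
  rw [List.maximum_singleton]; rfl
variable {α : Type*} [LinearOrder α]

theorem maximum_unbot'_mem {l : List α} (h : l ≠ []) (d : α) : WithBot.unbotD d l.maximum ∈ l := by
  obtain ⟨m, hm⟩ := WithBot.ne_bot_iff_exists.mp (List.maximum_ne_bot_of_ne_nil h)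
  rw [← hm, WithBot.unbotD_coe]
  exact List.maximum_mem hm.symm

theorem le_maximum_unbot' {l : List α} {x : α} (h : x ∈ l) (d : α) :
    x ≤ WithBot.unbotD d l.maximum := by
  obtain ⟨m, hm⟩ := WithBot.ne_bot_iff_exists.mp
    (List.maximum_ne_bot_of_ne_nil (List.ne_nil_of_mem h))
  rw [← hm, WithBot.unbotD_coe]
  exact_mod_cast (List.le_maximum_of_mem' h).trans_eq hm.symm

theorem minimum_untop'_mem {l : List α} (h : l ≠ []) (d : α) : WithTop.untopD d l.minimum ∈ l := by
  obtain ⟨m, hm⟩ := WithTop.ne_top_iff_exists.mp (List.minimum_ne_top_of_ne_nil h)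
  rw [← hm, WithTop.untopD_coe]
  exact List.minimum_mem hm.symm

theorem minimum_untop'_le {l : List α} {x : α} (h : x ∈ l) (d : α) :
    WithTop.untopD d l.minimum ≤ x := by
  obtain ⟨m, hm⟩ := WithTop.ne_top_iff_exists.mp
    (List.minimum_ne_top_of_ne_nil (List.ne_nil_of_mem h))
  rw [← hm, WithTop.untopD_coe]
  exact_mod_cast hm.trans_le (List.minimum_le_of_mem' h)

theorem maximum_unbot'_le {l : List α} (h : l ≠ []) {c : α} (hc : ∀ x ∈ l, x ≤ c) (d : α) :
    WithBot.unbotD d l.maximum ≤ c := hc _ (maximum_unbot'_mem h d)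

theorem le_minimum_untop' {l : List α} (h : l ≠ []) {c : α} (hc : ∀ x ∈ l, c ≤ x) (d : α) :
    c ≤ WithTop.untopD d l.minimum := hc _ (minimum_untop'_mem h d)

theorem max_le_maxR {l1 l2 : List α} (h1 : l1 ≠ []) (h : ∀ x ∈ l1, ∃ y ∈ l2, x ≤ y) (d : α) :
    WithBot.unbotD d l1.maximum ≤ WithBot.unbotD d l2.maximum := by
  obtain ⟨y, hy, hxy⟩ := h _ (maximum_unbot'_mem h1 d)
  exact hxy.trans (le_maximum_unbot' hy d)

theorem min_le_minR {l1 l2 : List α} (h2 : l2 ≠ []) (h : ∀ y ∈ l2, ∃ x ∈ l1, x ≤ y) (d : α) :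
    WithTop.untopD d l1.minimum ≤ WithTop.untopD d l2.minimum := by
  obtain ⟨x, hx, hxy⟩ := h _ (minimum_untop'_mem h2 d)
  exact (minimum_untop'_le hx d).trans hxy

/-- Strong induction principle for `SG`. -/
theorem ind {P : SG → Prop}
    (h : ∀ a b ls rs, (∀ x ∈ ls, P x) → (∀ x ∈ rs, P x) → P (mk a b ls rs)) : ∀ G, P G := by
  have key : ∀ n (G : SG), sizeOf G ≤ n → P G := by
    intro n
    induction n with
    | zero =>
      intro G hG
      obtain ⟨a, b, ls, rs⟩ := G
      simp only [SG.mk.sizeOf_spec] at hG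
      omega
    | succ n ih =>
      intro G hG
      obtain ⟨a, b, ls, rs⟩ := G
      refine h a b ls rs (fun x hx => ih x ?_) (fun x hx => ih x ?_) <;>
      · have := sizeOf_lt_of_mem hx
        simp only [SG.mk.sizeOf_spec] at hG
        omega
  exact fun G => key (sizeOf G) G le_rfl

theorem add_mk (a1 b1 : ℝ) (L1 R1 : List SG) (a2 b2 : ℝ) (L2 R2 : List SG) :
    add (mk a1 b1 L1 R1) (mk a2 b2 L2 R2) = mk (a1 + a2) (b1 + b2)
      (L1.map (fun x => add x (mk a2 b2 L2 R2)) ++ L2.map (fun x => add (mk a1 b1 L1 R1) x))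
      (R1.map (fun x => add x (mk a2 b2 L2 R2)) ++ R2.map (fun x => add (mk a1 b1 L1 R1) x)) := by
  rw [add]
  simp [List.attach_map_val]

theorem Ls_mk (a b : ℝ) (ls rs : List SG) :
    Ls (mk a b ls rs) = if ls.isEmpty then a else (WithBot.unbotD 0 (ls.map Rs).maximum) := by
  rw [Ls, stops]
  rw [List.attach_map_val (l := ls) (f := fun x => (stops x).2)]
  rfl

theorem Rs_mk (a b : ℝ) (ls rs : List SG) :
    Rs (mk a b ls rs) = if rs.isEmpty then b else (WithTop.untopD 0 (rs.map Ls).minimum) := by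
  rw [Rs, stops]
  rw [List.attach_map_val (l := rs) (f := fun x => (stops x).1)]
  rfl
theorem atomList_mk (a b : ℝ) (ls rs : List SG) :
    (mk a b ls rs).atomList =
      (if ls.isEmpty then [a] else (ls.map atomList).flatten)
      ++ (if rs.isEmpty then [b] else (rs.map atomList).flatten) := by
  rw [atomList, List.attach_map_val (l := ls) (f := atomList), List.attach_map_val (l := rs) (f := atomList)]

theorem mem_atomList_of_mem_L {x : SG} {ls : List SG} (hx : x ∈ ls) {s : ℝ}
    (hs : s ∈ x.atomList) (a b : ℝ) (rs : List SG) : s ∈ (mk a b ls rs).atomList := by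
  rw [atomList_mk]
  refine List.mem_append_left _ ?_
  rw [if_neg (by simp [List.isEmpty_iff, List.ne_nil_of_mem hx])]
  exact List.mem_flatten.mpr ⟨x.atomList, List.mem_map_of_mem (f := atomList) hx, hs⟩

theorem mem_atomList_of_mem_R {x : SG} {rs : List SG} (hx : x ∈ rs) {s : ℝ}
    (hs : s ∈ x.atomList) (a b : ℝ) (ls : List SG) : s ∈ (mk a b ls rs).atomList := by
  rw [atomList_mk]
  refine List.mem_append_right _ ?_
  rw [if_neg (by simp [List.isEmpty_iff, List.ne_nil_of_mem hx])]
  exact List.mem_flatten.mpr ⟨x.atomList, List.mem_map_of_mem (f := atomList) hx, hs⟩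

theorem stops_mem_atomList : ∀ G : SG, Ls G ∈ G.atomList ∧ Rs G ∈ G.atomList := by
  refine ind (fun a b ls rs ihL ihR => ⟨?_, ?_⟩)
  · rw [Ls_mk]
    rcases eq_or_ne ls [] with h | h
    · subst h
      rw [atomList_mk]
      simp
    · rw [if_neg (by simp [List.isEmpty_iff, h])]
      have hmem := maximum_unbot'_mem (l := ls.map Rs) (by simp [h]) 0
      obtain ⟨x, hx, hxe⟩ := List.mem_map.mp hmem
      rw [← hxe]
      exact mem_atomList_of_mem_L hx (ihL x hx).2 a b rs
  · rw [Rs_mk]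
    rcases eq_or_ne rs [] with h | h
    · subst h
      rw [atomList_mk]
      simp
    · rw [if_neg (by simp [List.isEmpty_iff, h])]
      have hmem := minimum_untop'_mem (l := rs.map Ls) (by simp [h]) 0
      obtain ⟨x, hx, hxe⟩ := List.mem_map.mp hmem
      rw [← hxe]
      exact mem_atomList_of_mem_R hx (ihR x hx).1 a b ls

theorem guaranteed_mk {a b : ℝ} {ls rs : List SG} (h : Guaranteed (mk a b ls rs)) :
    (∀ x ∈ ls, Guaranteed x) ∧ (∀ x ∈ rs, Guaranteed x) ∧
    (ls = [] → ∀ s ∈ (mk a b ls rs).atomList, a ≤ s) ∧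
    (rs = [] → ∀ s ∈ (mk a b ls rs).atomList, s ≤ b) := by
  rw [Guaranteed] at h
  exact h

theorem Ls_le_ra {a b : ℝ} {ls : List SG} (h : Guaranteed (mk a b ls [])) :
    Ls (mk a b ls []) ≤ b :=
  (guaranteed_mk h).2.2.2 rfl _ (stops_mem_atomList _).1

theorem la_le_Rs {a b : ℝ} {rs : List SG} (h : Guaranteed (mk a b [] rs)) :
    a ≤ Rs (mk a b [] rs) :=
  (guaranteed_mk h).2.2.1 rfl _ (stops_mem_atomList _).2

theorem birthday_mk (a b : ℝ) (ls rs : List SG) :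
    (mk a b ls rs).birthday =
      max (WithBot.unbotD 0 (ls.map (fun x => birthday x + 1)).maximum)
          (WithBot.unbotD 0 (rs.map (fun x => birthday x + 1)).maximum) := by
  rw [birthday, List.attach_map_val (l := ls) (f := fun x => birthday x + 1),
    List.attach_map_val (l := rs) (f := fun x => birthday x + 1)]

theorem birthday_lt_L {x : SG} {ls : List SG} (hx : x ∈ ls) (a b : ℝ) (rs : List SG) :
    x.birthday < (mk a b ls rs).birthday := by
  rw [birthday_mk]
  have : x.birthday + 1 ≤ WithBot.unbotD 0 (ls.map (fun x => birthday x + 1)).maximum :=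
    le_maximum_unbot' (List.mem_map_of_mem (f := fun x => birthday x + 1) hx) 0
  omega

theorem birthday_lt_R {x : SG} {rs : List SG} (hx : x ∈ rs) (a b : ℝ) (ls : List SG) :
    x.birthday < (mk a b ls rs).birthday := by
  rw [birthday_mk]
  have : x.birthday + 1 ≤ WithBot.unbotD 0 (rs.map (fun x => birthday x + 1)).maximum :=
    le_maximum_unbot' (List.mem_map_of_mem (f := fun x => birthday x + 1) hx) 0
  omega

theorem conj_wait_zero : (wait 0).conj = mk 0 0 [] [] := by
  rw [wait, zero, num, conj]
  norm_num

theorem conj_wait_succ (n : ℕ) : (wait (n + 1)).conj = mk 0 0 [] [(wait n).conj] := by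
  rw [wait, conj]
  norm_num
theorem wait_zero : wait 0 = mk 0 0 [] [] := by rw [wait, zero, num]

theorem wait_succ (n : ℕ) : wait (n + 1) = mk 0 0 [wait n] [] := by rw [wait]

theorem add_Wzero (a b : ℝ) (ls rs : List SG) :
    (mk a b ls rs).add (mk 0 0 [] []) =
      mk a b (ls.map (fun x => x.add (mk 0 0 [] []))) (rs.map (fun x => x.add (mk 0 0 [] []))) := by
  rw [add_mk]; norm_num

theorem add_Wsucc (a b : ℝ) (ls rs : List SG) (w : SG) :
    (mk a b ls rs).add (mk 0 0 [] [w]) =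
      mk a b (ls.map (fun x => x.add (mk 0 0 [] [w])))
        (rs.map (fun x => x.add (mk 0 0 [] [w])) ++ [(mk a b ls rs).add w]) := by
  rw [add_mk]; norm_num

theorem add_Vsucc (a b : ℝ) (ls rs : List SG) (w : SG) :
    (mk a b ls rs).add (mk 0 0 [w] []) =
      mk a b (ls.map (fun x => x.add (mk 0 0 [w] [])) ++ [(mk a b ls rs).add w])
        (rs.map (fun x => x.add (mk 0 0 [w] []))) := by
  rw [add_mk]; norm_num

theorem stops_add_zero : ∀ G : SG,
    Ls (G.add (mk 0 0 [] [])) = Ls G ∧ Rs (G.add (mk 0 0 [] [])) = Rs G := by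
  refine ind fun a b ls rs ihL ihR => ?_
  have hL : (ls.map (fun x => x.add (mk 0 0 [] []))).map Rs = ls.map Rs := by
    rw [List.map_map]; exact List.map_congr_left (fun x hx => (ihL x hx).2)
  have hR : (rs.map (fun x => x.add (mk 0 0 [] []))).map Ls = rs.map Ls := by
    rw [List.map_map]; exact List.map_congr_left (fun x hx => (ihR x hx).1)
  rw [add_Wzero, Ls_mk, Ls_mk, Rs_mk, Rs_mk, hL, hR, isEmpty_map, isEmpty_map]
  exact ⟨rfl, rfl⟩

/-- Uniform formula for the Left stop of `G - n̂`. -/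
theorem Ls_addW (a b : ℝ) (ls rs : List SG) (k : ℕ) :
    Ls ((mk a b ls rs).add ((wait k).conj)) =
      if ls.isEmpty then a
      else (WithBot.unbotD 0 (ls.map (fun x => Rs (x.add ((wait k).conj)))).maximum) := by
  cases k with
  | zero =>
    rw [conj_wait_zero, add_Wzero, Ls_mk, isEmpty_map, List.map_map]
    rfl
  | succ k =>
    rw [conj_wait_succ, add_Wsucc, Ls_mk, isEmpty_map, List.map_map]
    rfl

theorem Rs_addW_zero (a b : ℝ) (ls rs : List SG) :
    Rs ((mk a b ls rs).add ((wait 0).conj)) =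
      if rs.isEmpty then b
      else (WithTop.untopD 0 (rs.map (fun x => Ls (x.add ((wait 0).conj)))).minimum) := by
  rw [conj_wait_zero, add_Wzero, Rs_mk, isEmpty_map, List.map_map]
  rfl

theorem Rs_addW_succ (a b : ℝ) (ls rs : List SG) (k : ℕ) :
    Rs ((mk a b ls rs).add ((wait (k + 1)).conj)) =
      (WithTop.untopD 0 (rs.map (fun x => Ls (x.add ((wait (k + 1)).conj)))
        ++ [Ls ((mk a b ls rs).add ((wait k).conj))]).minimum) := by
  rw [conj_wait_succ, add_Wsucc, Rs_mk]
  rw [if_neg (by simp)]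
  rw [List.map_append, List.map_map, ← conj_wait_succ]
  rfl

theorem mono1 : ∀ G : SG, G.Guaranteed → ∀ m : ℕ,
    Ls (G.add ((wait (m + 1)).conj)) ≤ Ls (G.add ((wait m).conj)) ∧
    Rs (G.add ((wait (m + 1)).conj)) ≤ Rs (G.add ((wait m).conj)) := by
  refine ind fun a b ls rs ihL ihR hG m => ?_
  obtain ⟨hgL, hgR, _, _⟩ := guaranteed_mk hG
  have hf : ∀ k : ℕ, Ls ((mk a b ls rs).add ((wait (k + 1)).conj))
      ≤ Ls ((mk a b ls rs).add ((wait k).conj)) := by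
    intro k
    rw [Ls_addW, Ls_addW]
    rcases eq_or_ne ls [] with h | h
    · subst h; simp
    · rw [if_neg (by simp [h]), if_neg (by simp [h])]
      refine max_le_maxR (by simp [h]) ?_ 0
      rintro u hu
      obtain ⟨x, hx, rfl⟩ := List.mem_map.mp hu
      exact ⟨Rs (x.add ((wait k).conj)), List.mem_map_of_mem hx,
        (ihL x hx (hgL x hx) k).2⟩
  refine ⟨hf m, ?_⟩
  cases m with
  | zero =>
    rw [Rs_addW_succ, Rs_addW_zero]
    rcases eq_or_ne rs [] with h | h
    · subst h
      simp only [List.isEmpty_nil, ite_true, List.map_nil, List.nil_append]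
      rw [minimum_untop'_singleton, conj_wait_zero, (stops_add_zero _).1]
      exact Ls_le_ra hG
    · rw [if_neg (by simp [h])]
      refine min_le_minR (by simp [h]) ?_ 0
      rintro u hu
      obtain ⟨x, hx, rfl⟩ := List.mem_map.mp hu
      exact ⟨Ls (x.add ((wait 1).conj)),
        List.mem_append_left _ (List.mem_map_of_mem hx), (ihR x hx (hgR x hx) 0).1⟩
  | succ k =>
    rw [Rs_addW_succ, Rs_addW_succ]
    refine min_le_minR (by simp) ?_ 0
    rintro u hu
    rcases List.mem_append.mp hu with hu | hu
    · obtain ⟨x, hx, rfl⟩ := List.mem_map.mp hu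
      exact ⟨Ls (x.add ((wait (k + 2)).conj)),
        List.mem_append_left _ (List.mem_map_of_mem hx), (ihR x hx (hgR x hx) (k + 1)).1⟩
    · rw [List.mem_singleton.mp hu]
      exact ⟨Ls ((mk a b ls rs).add ((wait (k + 1)).conj)),
        List.mem_append_right _ (List.mem_singleton_self _), hf k⟩
theorem stab1 : ∀ G : SG, ∀ m : ℕ,
    (G.birthday ≤ m →
      Ls (G.add ((wait (m + 1)).conj)) = Ls (G.add ((wait m).conj))) ∧
    (G.birthday < m →
      Rs (G.add ((wait (m + 1)).conj)) = Rs (G.add ((wait m).conj))) := by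
  refine ind fun a b ls rs ihL ihR m => ?_
  have hf : ∀ k : ℕ, (mk a b ls rs).birthday ≤ k →
      Ls ((mk a b ls rs).add ((wait (k + 1)).conj))
        = Ls ((mk a b ls rs).add ((wait k).conj)) := by
    intro k hk
    rw [Ls_addW, Ls_addW]
    rcases eq_or_ne ls [] with h | h
    · subst h; rfl
    · have hmap : ls.map (fun x => Rs (x.add ((wait (k + 1)).conj)))
          = ls.map (fun x => Rs (x.add ((wait k).conj))) :=
        List.map_congr_left fun x hx =>
          (ihL x hx k).2 (lt_of_lt_of_le (birthday_lt_L hx a b rs) hk)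
      rw [hmap]
  refine ⟨hf m, fun hm => ?_⟩
  obtain ⟨k, rfl⟩ : ∃ k, m = k + 1 := ⟨m - 1, by omega⟩
  rw [Rs_addW_succ, Rs_addW_succ]
  have hmap : rs.map (fun x => Ls (x.add ((wait (k + 1 + 1)).conj)))
      = rs.map (fun x => Ls (x.add ((wait (k + 1)).conj))) :=
    List.map_congr_left fun x hx =>
      (ihR x hx (k + 1)).1 (by have := birthday_lt_R hx a b ls; omega)
  rw [hmap, hf k (by omega)]

/-- Uniform formula for the Right stop of `G + n̂`. -/
theorem Rs_addV (a b : ℝ) (ls rs : List SG) (k : ℕ) :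
    Rs ((mk a b ls rs).add (wait k)) =
      if rs.isEmpty then b
      else (WithTop.untopD 0 (rs.map (fun x => Ls (x.add (wait k)))).minimum) := by
  cases k with
  | zero =>
    rw [wait_zero, add_Wzero, Rs_mk, isEmpty_map, List.map_map]
    rfl
  | succ k =>
    rw [wait_succ, add_Vsucc, Rs_mk, isEmpty_map, List.map_map]
    rfl

theorem Ls_addV_zero (a b : ℝ) (ls rs : List SG) :
    Ls ((mk a b ls rs).add (wait 0)) =
      if ls.isEmpty then a
      else (WithBot.unbotD 0 (ls.map (fun x => Rs (x.add (wait 0)))).maximum) := by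
  rw [wait_zero, add_Wzero, Ls_mk, isEmpty_map, List.map_map]
  rfl

theorem Ls_addV_succ (a b : ℝ) (ls rs : List SG) (k : ℕ) :
    Ls ((mk a b ls rs).add (wait (k + 1))) =
      (WithBot.unbotD 0 (ls.map (fun x => Rs (x.add (wait (k + 1))))
        ++ [Rs ((mk a b ls rs).add (wait k))]).maximum) := by
  rw [wait_succ, add_Vsucc, Ls_mk]
  rw [if_neg (by simp)]
  rw [List.map_append, List.map_map, ← wait_succ]
  rfl

theorem mono2 : ∀ G : SG, G.Guaranteed → ∀ m : ℕ,
    Rs (G.add (wait m)) ≤ Rs (G.add (wait (m + 1))) ∧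
    Ls (G.add (wait m)) ≤ Ls (G.add (wait (m + 1))) := by
  refine ind fun a b ls rs ihL ihR hG m => ?_
  obtain ⟨hgL, hgR, _, _⟩ := guaranteed_mk hG
  have hq : ∀ k : ℕ, Rs ((mk a b ls rs).add (wait k))
      ≤ Rs ((mk a b ls rs).add (wait (k + 1))) := by
    intro k
    rw [Rs_addV, Rs_addV]
    rcases eq_or_ne rs [] with h | h
    · subst h; simp
    · rw [if_neg (by simp [h]), if_neg (by simp [h])]
      refine min_le_minR (by simp [h]) ?_ 0
      rintro u hu
      obtain ⟨x, hx, rfl⟩ := List.mem_map.mp hu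
      exact ⟨Ls (x.add (wait k)), List.mem_map_of_mem hx,
        (ihR x hx (hgR x hx) k).2⟩
  refine ⟨hq m, ?_⟩
  cases m with
  | zero =>
    rw [Ls_addV_succ, Ls_addV_zero]
    rcases eq_or_ne ls [] with h | h
    · subst h
      simp only [List.isEmpty_nil, ite_true, List.map_nil, List.nil_append]
      rw [maximum_unbot'_singleton, wait_zero, (stops_add_zero _).2]
      exact la_le_Rs hG
    · rw [if_neg (by simp [h])]
      refine max_le_maxR (by simp [h]) ?_ 0
      rintro u hu
      obtain ⟨x, hx, rfl⟩ := List.mem_map.mp hu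
      exact ⟨Rs (x.add (wait 1)),
        List.mem_append_left _ (List.mem_map_of_mem hx), (ihL x hx (hgL x hx) 0).1⟩
  | succ k =>
    rw [Ls_addV_succ, Ls_addV_succ]
    refine max_le_maxR (by simp) ?_ 0
    rintro u hu
    rcases List.mem_append.mp hu with hu | hu
    · obtain ⟨x, hx, rfl⟩ := List.mem_map.mp hu
      exact ⟨Rs (x.add (wait (k + 2))),
        List.mem_append_left _ (List.mem_map_of_mem hx), (ihL x hx (hgL x hx) (k + 1)).1⟩
    · rw [List.mem_singleton.mp hu]
      exact ⟨Rs ((mk a b ls rs).add (wait (k + 1))),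
        List.mem_append_right _ (List.mem_singleton_self _), hq k⟩

theorem stab2 : ∀ G : SG, ∀ m : ℕ,
    (G.birthday ≤ m → Rs (G.add (wait (m + 1))) = Rs (G.add (wait m))) ∧
    (G.birthday < m → Ls (G.add (wait (m + 1))) = Ls (G.add (wait m))) := by
  refine ind fun a b ls rs ihL ihR m => ?_
  have hq : ∀ k : ℕ, (mk a b ls rs).birthday ≤ k →
      Rs ((mk a b ls rs).add (wait (k + 1))) = Rs ((mk a b ls rs).add (wait k)) := by
    intro k hk
    rw [Rs_addV, Rs_addV]
    rcases eq_or_ne rs [] with h | h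
    · subst h; rfl
    · have hmap : rs.map (fun x => Ls (x.add (wait (k + 1))))
          = rs.map (fun x => Ls (x.add (wait k))) :=
        List.map_congr_left fun x hx =>
          (ihR x hx k).2 (lt_of_lt_of_le (birthday_lt_R hx a b ls) hk)
      rw [hmap]
  refine ⟨hq m, fun hm => ?_⟩
  obtain ⟨k, rfl⟩ : ∃ k, m = k + 1 := ⟨m - 1, by omega⟩
  rw [Ls_addV_succ, Ls_addV_succ]
  have hmap : ls.map (fun x => Rs (x.add (wait (k + 1 + 1))))
      = ls.map (fun x => Rs (x.add (wait (k + 1)))) :=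
    List.map_congr_left fun x hx =>
      (ihL x hx (k + 1)).1 (by have := birthday_lt_L hx a b rs; omega)
  rw [hmap, hq k (by omega)]
/-- For `n ≥ b(G)`, the pass-allowed stops are attained at `n` waiting moves:
`L̲s(G) = Ls(G - n̂)` and `R̄s(G) = Rs(G + n̂)`. -/
theorem passAllowed_stops_attained (G : SG) (hG : G.Guaranteed) (n : ℕ)
    (hn : G.birthday ≤ n) :
    G.lsU = Ls (G.add (wait n).conj) ∧ G.rsO = Rs (G.add (wait n)) := by
  constructor
  · have hstep : ∀ m, Ls (G.add ((wait (m + 1)).conj)) ≤ Ls (G.add ((wait m).conj)) :=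
      fun m => (mono1 G hG m).1
    have hstab : ∀ k, Ls (G.add ((wait (n + k)).conj)) = Ls (G.add ((wait n).conj)) := by
      intro k
      induction k with
      | zero => rfl
      | succ k ih =>
        rw [show n + (k + 1) = (n + k) + 1 from rfl,
          (stab1 G (n + k)).1 (le_trans hn (Nat.le_add_right n k)), ih]
    have hanti : ∀ m k, Ls (G.add ((wait (m + k)).conj)) ≤ Ls (G.add ((wait m).conj)) := by
      intro m k
      induction k with
      | zero => exact le_refl _
      | succ k ih => exact le_trans (hstep (m + k)) ih
    have hbound : ∀ m, Ls (G.add ((wait n).conj)) ≤ Ls (G.add ((wait m).conj)) := by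
      intro m
      rcases le_total m n with h | h
      · have := hanti m (n - m)
        rwa [Nat.add_sub_cancel' h] at this
      · have := hstab (m - n)
        rw [Nat.add_sub_cancel' h] at this
        exact this.ge
    rw [lsU]
    refine le_antisymm (ciInf_le ⟨Ls (G.add ((wait n).conj)), ?_⟩ n) (le_ciInf hbound)
    rintro y ⟨m, rfl⟩
    exact hbound m
  · have hstep : ∀ m, Rs (G.add (wait m)) ≤ Rs (G.add (wait (m + 1))) :=
      fun m => (mono2 G hG m).1
    have hstab : ∀ k, Rs (G.add (wait (n + k))) = Rs (G.add (wait n)) := by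
      intro k
      induction k with
      | zero => rfl
      | succ k ih =>
        rw [show n + (k + 1) = (n + k) + 1 from rfl,
          (stab2 G (n + k)).1 (le_trans hn (Nat.le_add_right n k)), ih]
    have hmono : ∀ m k, Rs (G.add (wait m)) ≤ Rs (G.add (wait (m + k))) := by
      intro m k
      induction k with
      | zero => exact le_refl _
      | succ k ih => exact le_trans ih (hstep (m + k))
    have hbound : ∀ m, Rs (G.add (wait m)) ≤ Rs (G.add (wait n)) := by
      intro m
      rcases le_total m n with h | h
      · have := hmono m (n - m)
        rwa [Nat.add_sub_cancel' h] at this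
      · have := hstab (m - n)
        rw [Nat.add_sub_cancel' h] at this
        exact this.le
    rw [rsO]
    refine le_antisymm (ciSup_le hbound) (le_ciSup (⟨Rs (G.add (wait n)), ?_⟩ : BddAbove (Set.range fun m => Rs (G.add (wait m)))) n)
    rintro y ⟨m, rfl⟩
    exact hbound m

end SG
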